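/- (Counterexample, unit square, P₁×Q₁²×P₁.) Let E = (−1/2,1/2)², κ = 1, f = 0, and g(x,y) = (x+1/2)(y+1/2) ≥ 0 on the closure of E. Define u_h(x,y) = (x+y)/2 + 1/4 and q_h(x,y) = −(y+1/2, x+1/2). Then (i) ∫_E q_h·p − ∫_E u_h div p = −∫_{∂E} g (p·n) dσ for all p ∈ Q₁(E)², and (ii) ∫_E v div q_h + τ∫_{∂E} u_h v dσ = τ∫_{∂E} g v dσ for all v ∈ P₁(E) and any τ > 0; moreover u_h(−1/2,−1/2) = −1/4 < 0. -/
import Mathlib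


open MeasureTheory

/-- Integral over an open rectangle (x0,x1) × (y0,y1). -/
noncomputable def rInt (x0 x1 y0 y1 : ℝ) (F : ℝ × ℝ → ℝ) : ℝ :=
  ∫ p in Set.Ioo x0 x1 ×ˢ Set.Ioo y0 y1, F p

/-- Boundary integral ∫_{∂E} F dσ over the rectangle boundary. -/
noncomputable def rBd (x0 x1 y0 y1 : ℝ) (F : ℝ × ℝ → ℝ) : ℝ :=
  (∫ t in x0..x1, F (t, y0)) + (∫ t in x0..x1, F (t, y1)) +
  (∫ t in y0..y1, F (x0, t)) + (∫ t in y0..y1, F (x1, t))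

/-- Boundary integral ∫_{∂E} F · n dσ over the rectangle boundary (outward normal). -/
noncomputable def rBdN (x0 x1 y0 y1 : ℝ) (F : ℝ × ℝ → ℝ × ℝ) : ℝ :=
  (∫ t in x0..x1, -(F (t, y0)).2) + (∫ t in x0..x1, (F (t, y1)).2) +
  (∫ t in y0..y1, -(F (x0, t)).1) + (∫ t in y0..y1, (F (x1, t)).1)

/-- Divergence of a planar vector field. -/
noncomputable def div2 (F : ℝ × ℝ → ℝ × ℝ) (z : ℝ × ℝ) : ℝ :=
  fderiv ℝ (fun w => (F w).1) z (1, 0) + fderiv ℝ (fun w => (F w).2) z (0, 1)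

lemma quad_int (f : ℝ → ℝ) (c0 c1 c2 : ℝ) (h : ∀ t, f t = c0 + c1 * t + c2 * t ^ 2) :
    ∫ t in (-(1/2:ℝ))..(1/2), f t = c0 + c2 / 12 := by
  have hd : ∀ t ∈ Set.uIcc (-(1/2:ℝ)) (1/2),
      HasDerivAt (fun t : ℝ => c0 * t + c1 * (t^2/2) + c2 * (t^3/3)) (f t) t := by
    intro t _
    have h1 : HasDerivAt (fun t : ℝ => c0 * t + c1 * (t^2/2) + c2 * (t^3/3))
        (c0 * 1 + c1 * (((2:ℕ) * t ^ (2-1))/2) + c2 * (((3:ℕ) * t ^ (3-1))/3)) t :=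
      (((hasDerivAt_id t).const_mul c0).add (((hasDerivAt_pow 2 t).div_const 2).const_mul c1)).add
        (((hasDerivAt_pow 3 t).div_const 3).const_mul c2)
    have h2 : c0 * 1 + c1 * (((2:ℕ) * t ^ (2-1))/2) + c2 * (((3:ℕ) * t ^ (3-1))/3) = f t := by
      rw [h t]; push_cast; ring
    rw [h2] at h1; exact h1
  have hi : IntervalIntegrable f volume (-(1/2:ℝ)) (1/2) := by
    have he : f = fun t => c0 + c1 * t + c2 * t ^ 2 := funext h
    rw [he]
    exact ((continuous_const.add (continuous_const.mul continuous_id)).add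
      (continuous_const.mul (continuous_pow 2))).intervalIntegrable _ _
  rw [intervalIntegral.integral_eq_sub_of_hasDerivAt hd hi]
  norm_num
  ring

lemma rInt_eq (F : ℝ × ℝ → ℝ) (hF : Continuous F) :
    rInt (-(1/2)) (1/2) (-(1/2)) (1/2) F
      = ∫ x in (-(1/2:ℝ))..(1/2), ∫ y in (-(1/2:ℝ))..(1/2), F (x, y) := by
  have hI : IntegrableOn F (Set.Ioo (-(1/2:ℝ)) (1/2) ×ˢ Set.Ioo (-(1/2:ℝ)) (1/2)) := by
    apply (hF.continuousOn.integrableOn_compact ((isCompact_Icc (a := -(1/2:ℝ)) (b := 1/2)).prod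
      (isCompact_Icc (a := -(1/2:ℝ)) (b := 1/2)))).mono_set
    exact Set.prod_mono Set.Ioo_subset_Icc_self Set.Ioo_subset_Icc_self
  rw [rInt, Measure.volume_eq_prod, setIntegral_prod _ hI]
  rw [intervalIntegral.integral_of_le (by norm_num), MeasureTheory.integral_Ioc_eq_integral_Ioo]
  apply setIntegral_congr_fun (measurableSet_Ioo)
  intro x _
  simp only
  rw [intervalIntegral.integral_of_le (by norm_num), MeasureTheory.integral_Ioc_eq_integral_Ioo]


/-- counterexample on the unit square E = (−1/2,1/2)² for
P₁ × Q₁² × P₁: u_h(x,y) = (x+y)/2 + 1/4 and q_h = −(y+1/2, x+1/2) solve the local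
HDG equations with λ_h = g = (x+1/2)(y+1/2), yet u_h(−1/2,−1/2) = −1/4 < 0. -/
theorem stmt_13 (τ : ℝ) (hτ : 0 < τ)
    (g u : ℝ × ℝ → ℝ) (q : ℝ × ℝ → ℝ × ℝ)
    (hg : ∀ z, g z = (z.1 + 1 / 2) * (z.2 + 1 / 2))
    (hu : ∀ z, u z = (z.1 + z.2) / 2 + 1 / 4)
    (hq : ∀ z, q z = (-(z.2 + 1 / 2), -(z.1 + 1 / 2))) :
    (∀ z ∈ Set.Icc (-(1 / 2 : ℝ)) (1 / 2) ×ˢ Set.Icc (-(1 / 2 : ℝ)) (1 / 2), 0 ≤ g z) ∧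
    -- (i) tested with all p ∈ Q₁(E)², p_k(x,y) = a_k + b_k x + c_k y + d_k xy
    (∀ a1 b1 c1 d1 a2 b2 c2 d2 : ℝ,
      rInt (-(1 / 2)) (1 / 2) (-(1 / 2)) (1 / 2)
          (fun z => (q z).1 * (a1 + b1 * z.1 + c1 * z.2 + d1 * z.1 * z.2) +
            (q z).2 * (a2 + b2 * z.1 + c2 * z.2 + d2 * z.1 * z.2)) -
        rInt (-(1 / 2)) (1 / 2) (-(1 / 2)) (1 / 2)
          (fun z => u z * ((b1 + d1 * z.2) + (c2 + d2 * z.1))) =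
      -rBdN (-(1 / 2)) (1 / 2) (-(1 / 2)) (1 / 2)
          (fun z => (g z * (a1 + b1 * z.1 + c1 * z.2 + d1 * z.1 * z.2),
            g z * (a2 + b2 * z.1 + c2 * z.2 + d2 * z.1 * z.2)))) ∧
    -- (ii) tested with all v ∈ P₁(E)
    (∀ v0 v1 v2 : ℝ,
      rInt (-(1 / 2)) (1 / 2) (-(1 / 2)) (1 / 2)
          (fun z => (v0 + v1 * z.1 + v2 * z.2) * div2 q z) +
        τ * rBd (-(1 / 2)) (1 / 2) (-(1 / 2)) (1 / 2)
          (fun z => u z * (v0 + v1 * z.1 + v2 * z.2)) =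
      τ * rBd (-(1 / 2)) (1 / 2) (-(1 / 2)) (1 / 2)
          (fun z => g z * (v0 + v1 * z.1 + v2 * z.2))) ∧
    u (-(1 / 2), -(1 / 2)) = -(1 / 4) ∧ (-(1 / 4) : ℝ) < 0 := by

  refine ⟨?_, ?_, ?_, ?_, by norm_num⟩
  · -- nonnegativity of g
    rintro z ⟨hz1, hz2⟩
    rw [hg]
    have h1 : (0:ℝ) ≤ z.1 + 1/2 := by have := hz1.1; linarith
    have h2 : (0:ℝ) ≤ z.2 + 1/2 := by have := hz2.1; linarith
    positivity
  · -- part (i)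
    intro a1 b1 c1 d1 a2 b2 c2 d2
    simp only [hq, hu, hg, rBdN]
    rw [rInt_eq _ (by fun_prop), rInt_eq _ (by fun_prop)]
    have inner1 : ∀ x : ℝ, (∫ y in (-(1/2:ℝ))..(1/2),
        -(y + 1/2) * (a1 + b1 * x + c1 * y + d1 * x * y) +
        -(x + 1/2) * (a2 + b2 * x + c2 * y + d2 * x * y))
        = (-(1/2) * (a1 + b1*x) - (x + 1/2) * (a2 + b2*x)) + (-(c1 + d1*x)) / 12 :=
      fun x => quad_int _ (-(1/2) * (a1 + b1*x) - (x + 1/2) * (a2 + b2*x))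
        (-(a1 + b1*x) - (1/2)*(c1 + d1*x) - (x + 1/2)*(c2 + d2*x))
        (-(c1 + d1*x)) (fun t => by ring)
    have inner2 : ∀ x : ℝ, (∫ y in (-(1/2:ℝ))..(1/2),
        ((x + y) / 2 + 1/4) * (b1 + d1 * y + (c2 + d2 * x)))
        = ((x/2 + 1/4) * (b1 + c2 + d2*x)) + (d1/2) / 12 :=
      fun x => quad_int _ ((x/2 + 1/4) * (b1 + c2 + d2*x))
        ((x/2 + 1/4) * d1 + (1/2)*(b1 + c2 + d2*x)) (d1/2) (fun t => by ring)
    simp only [inner1, inner2]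
    rw [quad_int (fun x => (-(1/2) * (a1 + b1*x) - (x + 1/2) * (a2 + b2*x)) + (-(c1 + d1*x)) / 12)
      (-a1/2 - a2/2 - c1/12) (-b1/2 - a2 - b2/2 - d1/12) (-b2) (fun t => by ring)]
    rw [quad_int (fun x => ((x/2 + 1/4) * (b1 + c2 + d2*x)) + (d1/2) / 12)
      ((b1+c2)/4 + d1/24) ((b1+c2)/2 + d2/4) (d2/2) (fun t => by ring)]
    rw [quad_int (fun t => -((t + 1/2) * (-(1/2) + 1/2) * (a2 + b2 * t + c2 * -(1/2) + d2 * t * -(1/2))))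
      0 0 0 (fun t => by ring)]
    rw [quad_int (fun t => (t + 1/2) * (1/2 + 1/2) * (a2 + b2 * t + c2 * (1/2) + d2 * t * (1/2)))
      ((a2 + c2/2)/2) ((a2 + c2/2) + (b2 + d2/2)/2) (b2 + d2/2) (fun t => by ring)]
    rw [quad_int (fun t => -((-(1/2) + 1/2) * (t + 1/2) * (a1 + b1 * -(1/2) + c1 * t + d1 * -(1/2) * t)))
      0 0 0 (fun t => by ring)]
    rw [quad_int (fun t => (1/2 + 1/2) * (t + 1/2) * (a1 + b1 * (1/2) + c1 * t + d1 * (1/2) * t))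
      ((a1 + b1/2)/2) ((a1 + b1/2) + (c1 + d1/2)/2) (c1 + d1/2) (fun t => by ring)]
    ring
  · -- part (ii)
    intro v0 v1 v2
    have hdiv : ∀ z : ℝ × ℝ, div2 q z = 0 := by
      intro z
      have h1 : (fun w : ℝ × ℝ => (q w).1) = fun w : ℝ × ℝ => -(w.2 + 1/2) :=
        funext fun w => by rw [hq]
      have h2 : (fun w : ℝ × ℝ => (q w).2) = fun w : ℝ × ℝ => -(w.1 + 1/2) :=
        funext fun w => by rw [hq]
      have d1 : HasFDerivAt (fun w : ℝ × ℝ => -(w.2 + 1/2))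
          (-(ContinuousLinearMap.snd ℝ ℝ ℝ)) z := (hasFDerivAt_snd.add_const (1/2)).neg
      have d2 : HasFDerivAt (fun w : ℝ × ℝ => -(w.1 + 1/2))
          (-(ContinuousLinearMap.fst ℝ ℝ ℝ)) z := (hasFDerivAt_fst.add_const (1/2)).neg
      rw [div2, h1, h2, d1.fderiv, d2.fderiv]
      simp
    have h0 : rInt (-(1 / 2)) (1 / 2) (-(1 / 2)) (1 / 2)
        (fun z => (v0 + v1 * z.1 + v2 * z.2) * div2 q z) = 0 := by
      simp only [hdiv, mul_zero, rInt, integral_zero]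
    rw [h0, zero_add]
    have hb : rBd (-(1 / 2)) (1 / 2) (-(1 / 2)) (1 / 2)
          (fun z => u z * (v0 + v1 * z.1 + v2 * z.2)) =
        rBd (-(1 / 2)) (1 / 2) (-(1 / 2)) (1 / 2)
          (fun z => g z * (v0 + v1 * z.1 + v2 * z.2)) := by
      simp only [rBd, hu, hg]
      rw [quad_int (fun t => ((t + -(1/2)) / 2 + 1/4) * (v0 + v1 * t + v2 * -(1/2)))
        0 ((v0 - v2/2)/2) (v1/2) (fun t => by ring)]
      rw [quad_int (fun t => ((t + 1/2) / 2 + 1/4) * (v0 + v1 * t + v2 * (1/2)))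
        ((v0 + v2/2)/2) ((v0 + v2/2)/2 + v1/2) (v1/2) (fun t => by ring)]
      rw [quad_int (fun t => ((-(1/2) + t) / 2 + 1/4) * (v0 + v1 * -(1/2) + v2 * t))
        0 ((v0 - v1/2)/2) (v2/2) (fun t => by ring)]
      rw [quad_int (fun t => ((1/2 + t) / 2 + 1/4) * (v0 + v1 * (1/2) + v2 * t))
        ((v0 + v1/2)/2) ((v0 + v1/2)/2 + v2/2) (v2/2) (fun t => by ring)]
      rw [quad_int (fun t => (t + 1/2) * (-(1/2) + 1/2) * (v0 + v1 * t + v2 * -(1/2)))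
        0 0 0 (fun t => by ring)]
      rw [quad_int (fun t => (t + 1/2) * (1/2 + 1/2) * (v0 + v1 * t + v2 * (1/2)))
        ((v0 + v2/2)/2) ((v0 + v2/2) + v1/2) v1 (fun t => by ring)]
      rw [quad_int (fun t => (-(1/2) + 1/2) * (t + 1/2) * (v0 + v1 * -(1/2) + v2 * t))
        0 0 0 (fun t => by ring)]
      rw [quad_int (fun t => (1/2 + 1/2) * (t + 1/2) * (v0 + v1 * (1/2) + v2 * t))
        ((v0 + v1/2)/2) ((v0 + v1/2) + v2/2) v2 (fun t => by ring)]
      ring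
    rw [hb]
  · -- point value
    rw [hu]
    norm_num
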